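/- If every nonzero polynomial in R_n^d is Haldane, then L_n^d is linearly ordered under the squeezing order. -/

import Mathlib

open MvPolynomial

/-- A polynomial is translation invariant if substituting `zᵢ ↦ zᵢ + c` fixes it for all `c`. -/
def TransInv {F : Type*} [CommSemiring F] {n : ℕ} (p : MvPolynomial (Fin n) F) : Prop :=
  ∀ c : F, aeval (fun i : Fin n => X i + C c) p = p

/-- One squeeze: decrement an entry `a` and increment an entry `b` with `a > b + 1`. -/
def SqueezeStep (s t : Multiset ℕ) : Prop :=
  ∃ (u : Multiset ℕ) (a b : ℕ), b + 1 < a ∧ s = a ::ₘ b ::ₘ u ∧ t = (a - 1) ::ₘ (b + 1) ::ₘ u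

/-- The (strict) squeezing order: `t` is obtained from `s` by a nonempty sequence of squeezes. -/
def Squeezes (s t : Multiset ℕ) : Prop := Relation.TransGen SqueezeStep s t

/-- The multiset of exponents of a monomial. -/
def expMultiset {n : ℕ} (d : Fin n →₀ ℕ) : Multiset ℕ := Multiset.map d Finset.univ.val

/-- `B p`: the symmetrized monomials (identified with multisets of exponents) occurring
with nonzero coefficient in the symmetric polynomial `p`. -/
def BSet {F : Type*} [CommSemiring F] {n : ℕ} (p : MvPolynomial (Fin n) F) :
    Set (Multiset ℕ) :=
  {m | ∃ d : Fin n →₀ ℕ, expMultiset d = m ∧ coeff d p ≠ 0}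

/-- A symmetric polynomial is Haldane if its squeezing poset has a maximum. -/
def Haldane {F : Type*} [CommSemiring F] {n : ℕ} (p : MvPolynomial (Fin n) F) : Prop :=
  ∃ m ∈ BSet p, ∀ s ∈ BSet p, Relation.ReflTransGen SqueezeStep m s

/-- A symmetrized monomial written as a weakly decreasing sequence. -/
def sortedDesc (s : Multiset ℕ) : List ℕ := (Multiset.sort s (· ≤ ·)).reverse

/-- The strict lexicographic order on symmetrized monomials, compared as weakly
decreasing sequences. -/
def LexGT (s t : Multiset ℕ) : Prop := List.Lex (· < ·) (sortedDesc t) (sortedDesc s)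

/-- `m` is the lexicographic maximum of `B p`. -/
def IsLexMax {F : Type*} [CommSemiring F] {n : ℕ} (p : MvPolynomial (Fin n) F)
    (m : Multiset ℕ) : Prop :=
  m ∈ BSet p ∧ ∀ s ∈ BSet p, s ≠ m → LexGT m s

/-- `L_n^d`: the lexicographic maxima of the squeezing posets of nonzero translation
invariant symmetric polynomials in `n` variables, homogeneous of degree `d`. -/
def LSet (F : Type*) [CommSemiring F] (n d : ℕ) : Set (Multiset ℕ) :=
  {m | ∃ p : MvPolynomial (Fin n) F, p ≠ 0 ∧ p.IsSymmetric ∧ TransInv p ∧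
    p.IsHomogeneous d ∧ IsLexMax p m}

/-- A symmetrized monomial is completely squeezable if it squeezes down to every
lexicographically smaller symmetrized monomial of the same degree and arity. -/
def CompletelySqueezable (n : ℕ) (s : Multiset ℕ) : Prop :=
  ∀ t : Multiset ℕ, Multiset.card t = n → t.sum = s.sum → LexGT s t → Squeezes s t


lemma sortedDesc_cons_max {s : Multiset ℕ} {m : ℕ} (h : ∀ x ∈ s, x ≤ m) :
    sortedDesc (m ::ₘ s) = m :: sortedDesc s := by
  have key : Multiset.sort (m ::ₘ s) (· ≤ ·) = Multiset.sort s (· ≤ ·) ++ [m] := by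
    refine (fun hp h1 h2 => List.Perm.eq_of_pairwise' (r := (· ≤ ·)) h1 h2 hp) ?_ ?_ ?_
    · rw [← Multiset.coe_eq_coe]
      have : ((Multiset.sort s (· ≤ ·) ++ [m] : List ℕ) : Multiset ℕ)
          = ↑(Multiset.sort s (· ≤ ·)) + ↑([m] : List ℕ) := rfl
      rw [this, Multiset.sort_eq]
      rw [add_comm]
      simp
    · exact Multiset.pairwise_sort _ _
    · rw [List.pairwise_append]
      refine ⟨Multiset.pairwise_sort _ _, List.pairwise_singleton _ _, ?_⟩
      intro a ha b hb
      rw [List.mem_singleton] at hb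
      subst hb
      exact h a (by rwa [← Multiset.mem_sort (r := (· ≤ ·))] )
  rw [sortedDesc, key, List.reverse_append, List.reverse_singleton, sortedDesc]
  rfl

lemma exists_max_decomp {s : Multiset ℕ} (hs : s ≠ 0) :
    ∃ m u, s = m ::ₘ u ∧ (∀ x ∈ u, x ≤ m) ∧ (∀ x ∈ s, x ≤ m) := by
  have hne : s.toFinset.Nonempty := by
    rw [Multiset.toFinset_nonempty]
    exact hs
  refine ⟨s.toFinset.max' hne, s.erase (s.toFinset.max' hne), ?_, ?_, ?_⟩
  · exact (Multiset.cons_erase (Multiset.mem_toFinset.mp (s.toFinset.max'_mem hne))).symm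
  · intro x hx
    exact s.toFinset.le_max' x (Multiset.mem_toFinset.mpr (Multiset.mem_of_mem_erase hx))
  · intro x hx
    exact s.toFinset.le_max' x (Multiset.mem_toFinset.mpr hx)

lemma lexGT_of_counts : ∀ (k : ℕ) (s t : Multiset ℕ) (N : ℕ), Multiset.card s ≤ k →
    t.count N < s.count N → (∀ x, N < x → s.count x = t.count x) → LexGT s t := by
  intro k
  induction k with
  | zero =>
    intro s t N hcard hc hx
    interval_cases hs : Multiset.card s
    · rw [Multiset.card_eq_zero] at hs
      subst hs
      simp at hc
  | succ k ih =>
    intro s t N hcard hc hx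
    have hNs : N ∈ s := by
      rw [← Multiset.count_pos]; omega
    have hsne : s ≠ 0 := fun h => by simp [h] at hNs
    obtain ⟨ms, us, hs, hus, hms⟩ := exists_max_decomp hsne
    by_cases htz : t = 0
    · subst htz
      rw [LexGT, hs, sortedDesc_cons_max hus]
      have : sortedDesc 0 = [] := by simp [sortedDesc]
      rw [this]
      exact List.Lex.nil
    · obtain ⟨mt, ut, ht, hut, hmt⟩ := exists_max_decomp htz
      have hNms : N ≤ ms := hms N hNs
      have hcardus : Multiset.card us ≤ k := by
        have := congrArg Multiset.card hs
        simp at this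
        omega
      rw [LexGT, hs, ht, sortedDesc_cons_max hus, sortedDesc_cons_max hut]
      by_cases heq : ms = mt
      · subst heq
        apply List.Lex.cons
        -- apply ih to us ut N
        have hkey : ut.count N < us.count N ∧ ∀ x, N < x → us.count x = ut.count x := by
          constructor
          · by_cases hNm : N = ms
            · subst hNm
              have h1 : s.count N = us.count N + 1 := by
                rw [hs, Multiset.count_cons_self]
              have h2 : t.count N = ut.count N + 1 := by
                rw [ht, Multiset.count_cons_self]
              omega
            · have h1 : s.count N = us.count N := by
                rw [hs, Multiset.count_cons_of_ne hNm]
              have h2 : t.count N = ut.count N := by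
                rw [ht, Multiset.count_cons_of_ne hNm]
              omega
          · intro x hxN
            have h3 := hx x hxN
            by_cases hxm : x = ms
            · subst hxm
              have h1 : s.count x = us.count x + 1 := by
                rw [hs, Multiset.count_cons_self]
              have h2 : t.count x = ut.count x + 1 := by
                rw [ht, Multiset.count_cons_self]
              omega
            · have h1 : s.count x = us.count x := by
                rw [hs, Multiset.count_cons_of_ne hxm]
              have h2 : t.count x = ut.count x := by
                rw [ht, Multiset.count_cons_of_ne hxm]
              omega
        exact ih us ut N hcardus hkey.1 hkey.2
      · apply List.Lex.rel
        -- need mt < ms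
        rcases lt_or_gt_of_ne heq with hlt | hgt
        · exfalso
          have hmtN : N < mt := lt_of_le_of_lt hNms hlt
          have := hx mt hmtN
          have hmts : mt ∈ s := by
            rw [← Multiset.count_pos, this, Multiset.count_pos, ht]
            exact Multiset.mem_cons_self _ _
          exact absurd (hms mt hmts) (not_le.mpr hlt)
        · exact hgt

lemma lexGT_of_squeezeStep {s t : Multiset ℕ} (h : SqueezeStep s t) : LexGT s t := by
  obtain ⟨u, a, b, hab, hs, ht⟩ := h
  apply lexGT_of_counts (Multiset.card s) s t a le_rfl
  · have h1 : s.count a = u.count a + 1 := by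
      rw [hs, Multiset.count_cons_self, Multiset.count_cons_of_ne (by omega)]
    have h2 : t.count a = u.count a := by
      rw [ht, Multiset.count_cons_of_ne (by omega), Multiset.count_cons_of_ne (by omega)]
    omega
  · intro x hx
    have h1 : s.count x = u.count x := by
      rw [hs, Multiset.count_cons_of_ne (by omega), Multiset.count_cons_of_ne (by omega)]
    have h2 : t.count x = u.count x := by
      rw [ht, Multiset.count_cons_of_ne (by omega), Multiset.count_cons_of_ne (by omega)]
    omega

lemma lexGT_trans {a b c : Multiset ℕ} (h1 : LexGT a b) (h2 : LexGT b c) : LexGT a c :=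
  List.lex_trans (fun h₁ h₂ => lt_trans h₁ h₂) h2 h1

lemma lexGT_of_squeezes {s t : Multiset ℕ} (h : Squeezes s t) : LexGT s t := by
  induction h with
  | single h => exact lexGT_of_squeezeStep h
  | tail _ h ih => exact lexGT_trans ih (lexGT_of_squeezeStep h)

lemma lexGT_asymm {a b : Multiset ℕ} (h1 : LexGT a b) (h2 : LexGT b a) : False :=
  Std.Asymm.asymm (r := List.Lex ((· < ·) : ℕ → ℕ → Prop)) _ _ h1 h2

lemma lexGT_irrefl {a : Multiset ℕ} (h : LexGT a a) : False := lexGT_asymm h h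

lemma sortedDesc_injective {s t : Multiset ℕ} (h : sortedDesc s = sortedDesc t) : s = t := by
  rw [sortedDesc, sortedDesc] at h
  have := List.reverse_injective h
  calc s = ↑(Multiset.sort s (· ≤ ·)) := (Multiset.sort_eq _ _).symm
    _ = ↑(Multiset.sort t (· ≤ ·)) := by rw [this]
    _ = t := Multiset.sort_eq _ _

lemma lexGT_trichotomy {s t : Multiset ℕ} (h : s ≠ t) : LexGT s t ∨ LexGT t s := by
  rcases trichotomous (r := List.Lex ((· < ·) : ℕ → ℕ → Prop)) (sortedDesc t) (sortedDesc s)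
    with h1 | h1 | h1
  · exact Or.inl h1
  · exact absurd (sortedDesc_injective h1.symm) h
  · exact Or.inr h1

lemma combo_ne_zero {F : Type*} [Field F] {c e l : F} (hc : e = 0 → c ≠ 0)
    (hl : l ≠ -c / e) : c + l * e ≠ 0 := by
  by_cases he : e = 0
  · simpa [he] using hc he
  · intro h0
    have h1 : l * e = -c := by linear_combination h0
    exact hl ((eq_div_iff he).mpr h1)

lemma key_lemma (F : Type*) [Field F] [CharZero F] (n : ℕ) (d : ℕ)
    (h : ∀ p : MvPolynomial (Fin n) F, p ≠ 0 → p.IsSymmetric → TransInv p →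
      p.IsHomogeneous d → Haldane p) :
    ∀ m₁ ∈ LSet F n d, ∀ m₂ ∈ LSet F n d, LexGT m₁ m₂ → Squeezes m₁ m₂ := by
  classical
  intro m₁ hm₁ m₂ hm₂ hg
  obtain ⟨p₁, hp₁ne, hp₁sym, hp₁ti, hp₁hom, hp₁max⟩ := hm₁
  obtain ⟨p₂, hp₂ne, hp₂sym, hp₂ti, hp₂hom, hp₂max⟩ := hm₂
  obtain ⟨d₁, hd₁, hc₁⟩ := hp₁max.1
  obtain ⟨d₂, hd₂, hc₂⟩ := hp₂max.1
  -- pick a scalar avoiding two bad values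
  obtain ⟨l, hl⟩ := Infinite.exists_notMem_finset
    ({-(coeff d₁ p₁) / (coeff d₁ p₂), -(coeff d₂ p₁) / (coeff d₂ p₂)} : Finset F)
  simp only [Finset.mem_insert, Finset.mem_singleton, not_or] at hl
  set p : MvPolynomial (Fin n) F := p₁ + C l * p₂ with hp
  have hco : ∀ e : Fin n →₀ ℕ, coeff e p = coeff e p₁ + l * coeff e p₂ := by
    intro e
    rw [hp, coeff_add, coeff_C_mul]
  have hcp₁ : coeff d₁ p ≠ 0 := by
    rw [hco]
    exact combo_ne_zero (fun _ => hc₁) hl.1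
  have hcp₂ : coeff d₂ p ≠ 0 := by
    rw [hco]
    exact combo_ne_zero (fun h0 => absurd h0 hc₂) hl.2
  have hpne : p ≠ 0 := fun h0 => hcp₁ (by simp [h0])
  have hpsym : p.IsSymmetric := by
    intro σ
    rw [hp, map_add, map_mul, rename_C, hp₁sym σ, hp₂sym σ]
  have hpti : TransInv p := by
    intro c
    rw [hp, map_add, map_mul, aeval_C, hp₁ti c, hp₂ti c, algebraMap_eq]
  have hphom : p.IsHomogeneous d := hp₁hom.add (hp₂hom.C_mul l)
  obtain ⟨m, hmB, hall⟩ := h p hpne hpsym hpti hphom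
  have hm₁B : m₁ ∈ BSet p := ⟨d₁, hd₁, hcp₁⟩
  have hm₂B : m₂ ∈ BSet p := ⟨d₂, hd₂, hcp₂⟩
  have hr₁ := hall m₁ hm₁B
  have hr₂ := hall m₂ hm₂B
  -- m belongs to BSet p₁ or BSet p₂
  have hmB' : m ∈ BSet p₁ ∨ m ∈ BSet p₂ := by
    obtain ⟨e, he, hce⟩ := hmB
    rw [hco] at hce
    by_cases h1 : coeff e p₁ = 0
    · right
      refine ⟨e, he, fun h2 => hce ?_⟩
      rw [h1, h2]; ring
    · exact Or.inl ⟨e, he, h1⟩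
  have hmm₁ : m = m₁ := by
    by_contra hne
    have hsq : Squeezes m m₁ := by
      rcases (Relation.reflTransGen_iff_eq_or_transGen).mp hr₁ with h0 | h0
      · exact absurd h0.symm hne
      · exact h0
    have hlex : LexGT m m₁ := lexGT_of_squeezes hsq
    have hlex' : LexGT m₁ m := by
      rcases hmB' with hB1 | hB2
      · exact hp₁max.2 m hB1 hne
      · by_cases hmm2 : m = m₂
        · rw [hmm2]; exact hg
        · exact lexGT_trans hg (hp₂max.2 m hB2 hmm2)
    exact lexGT_asymm hlex hlex'
  rw [hmm₁] at hr₂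
  rcases (Relation.reflTransGen_iff_eq_or_transGen).mp hr₂ with h0 | h0
  · exact absurd (by rw [h0] at hg; exact hg) lexGT_irrefl
  · exact h0

theorem stmt_13 (F : Type*) [Field F] [CharZero F] (n : ℕ) (hn : 0 < n) (d : ℕ)
    (h : ∀ p : MvPolynomial (Fin n) F, p ≠ 0 → p.IsSymmetric → TransInv p →
      p.IsHomogeneous d → Haldane p) :
    ∀ m₁ ∈ LSet F n d, ∀ m₂ ∈ LSet F n d,
      m₁ = m₂ ∨ Squeezes m₁ m₂ ∨ Squeezes m₂ m₁ := by
  intro m₁ hm₁ m₂ hm₂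
  by_cases heq : m₁ = m₂
  · exact Or.inl heq
  · rcases lexGT_trichotomy heq with hg | hg
    · exact Or.inr (Or.inl (key_lemma F n d h m₁ hm₁ m₂ hm₂ hg))
    · exact Or.inr (Or.inr (key_lemma F n d h m₂ hm₂ m₁ hm₁ hg))
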